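/- Let f be an entire function, not identically zero, of exponential type, i.e., |f(z)| ≤ C·e^{k|z|} for some constants C, k > 0 and all z ∈ ℂ. Define the indicator function h_f(φ) = limsup_{r→∞} (log|f(re^{iφ})|)/r. Then h_f(φ) + h_f(φ + π) ≥ 0 for every φ ∈ ℝ. -/

import Mathlib

open Filter Complex Topology

local notation "expR" => Real.exp

lemma pl_step (F : ℂ → ℂ) (hF : Differentiable ℂ F) {A K M : ℝ}
    (hbd : ∀ z, ‖F z‖ ≤ A * expR (K * ‖z‖)) (u : ℂ) (hu : ‖u‖ = 1) (a b : ℝ)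
    (h1 : ∀ r : ℝ, 0 ≤ r → ‖F (r * u)‖ ≤ M * expR (a * r))
    (h2 : ∀ r : ℝ, 0 ≤ r → ‖F (r * (u * I))‖ ≤ M * expR (b * r))
    (z : ℂ) (hx : 0 ≤ z.re) (hy : 0 ≤ z.im) :
    ‖F (z * u)‖ ≤ M * expR (a * z.re + b * z.im) := by
  set ζ : ℂ := (-a : ℝ) + (b : ℝ) * I with hζ
  set G : ℂ → ℂ := fun w => F (w * u) * Complex.exp (ζ * w) with hG
  have hre : ∀ w : ℂ, (ζ * w).re = -a * w.re - b * w.im := by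
    intro w
    simp only [hζ, Complex.mul_re, Complex.ofReal_re, Complex.ofReal_im,
      Complex.mul_im, Complex.I_re, Complex.I_im, Complex.add_re, Complex.add_im]
    ring
  have hGn : ∀ w : ℂ, ‖G w‖ = ‖F (w * u)‖ * expR (-a * w.re - b * w.im) := by
    intro w
    rw [hG]
    simp only [norm_mul, Complex.norm_exp, hre]
  have key : ‖G z‖ ≤ M := by
    apply PhragmenLindelof.quadrant_I (f := G) (C := M)
    · exact ((hF.comp (differentiable_id.mul_const u)).mul
        ((differentiable_const ζ).mul differentiable_id).cexp).diffContOnCl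
    · refine ⟨1, one_lt_two, K + ‖ζ‖, ?_⟩
      refine (Asymptotics.isBigO_of_le' (c := A) _ fun w => ?_).mono inf_le_left
      have h1' : ‖F (w * u)‖ ≤ A * expR (K * ‖w‖) := by
        have := hbd (w * u)
        rwa [norm_mul, hu, mul_one] at this
      have h2' : -a * w.re - b * w.im ≤ ‖ζ‖ * ‖w‖ := by
        calc -a * w.re - b * w.im = (ζ * w).re := (hre w).symm
        _ ≤ ‖ζ * w‖ := Complex.re_le_norm _
        _ = ‖ζ‖ * ‖w‖ := by rw [norm_mul]
      rw [hGn, Real.norm_eq_abs, abs_of_pos (Real.exp_pos _), Real.rpow_one]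
      calc ‖F (w * u)‖ * expR (-a * w.re - b * w.im)
          ≤ (A * expR (K * ‖w‖)) * expR (‖ζ‖ * ‖w‖) := by
            exact mul_le_mul h1' (Real.exp_le_exp.2 h2') (Real.exp_pos _).le
              (le_trans (norm_nonneg _) h1')
        _ = A * expR ((K + ‖ζ‖) * ‖w‖) := by rw [mul_assoc, ← Real.exp_add]; ring_nf
    · intro x hxx
      have := h1 x hxx
      have e : ‖G (x:ℂ)‖ = ‖F (x * u)‖ * expR (-a * x) := by
        rw [hGn]; simp
      rw [e]
      calc ‖F ((x:ℂ) * u)‖ * expR (-a * x) ≤ (M * expR (a * x)) * expR (-a * x) := by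
            exact mul_le_mul_of_nonneg_right this (Real.exp_pos _).le
        _ = M := by rw [mul_assoc, ← Real.exp_add]; simp
    · intro x hxx
      have := h2 x hxx
      have e : ‖G ((x:ℂ) * I)‖ = ‖F (x * (u * I))‖ * expR (-b * x) := by
        rw [hGn]
        have : (x:ℂ) * I * u = (x:ℂ) * (u * I) := by ring
        rw [this]
        simp
      rw [e]
      calc ‖F ((x:ℂ) * (u * I))‖ * expR (-b * x) ≤ (M * expR (b * x)) * expR (-b * x) := by
            exact mul_le_mul_of_nonneg_right this (Real.exp_pos _).le
        _ = M := by rw [mul_assoc, ← Real.exp_add]; simp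
    · exact hx
    · exact hy
  have := hGn z
  rw [this] at key
  have hpos : (0:ℝ) < expR (-a * z.re - b * z.im) := Real.exp_pos _
  calc ‖F (z * u)‖ = (‖F (z * u)‖ * expR (-a * z.re - b * z.im)) * expR (a * z.re + b * z.im) := by
        rw [mul_assoc, ← Real.exp_add]; ring_nf; simp
    _ ≤ M * expR (a * z.re + b * z.im) :=
        mul_le_mul_of_nonneg_right key (Real.exp_pos _).le

lemma pl_improve (g : ℂ → ℂ) (hg : Differentiable ℂ g) {A K M ε c : ℝ}
    (hbd : ∀ z, ‖g z‖ ≤ A * expR (K * ‖z‖))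
    (hre : ∀ r : ℝ, 0 ≤ r → ‖g r‖ ≤ M * expR (-ε * r))
    (hre' : ∀ r : ℝ, 0 ≤ r → ‖g (-(r:ℂ))‖ ≤ M * expR (-ε * r))
    (him : ∀ r : ℝ, 0 ≤ r → ‖g ((r:ℂ) * I)‖ ≤ M * expR (c * r))
    (him' : ∀ r : ℝ, 0 ≤ r → ‖g (-((r:ℂ) * I))‖ ≤ M * expR (c * r)) :
    (∀ r : ℝ, 0 ≤ r → ‖g ((r:ℂ) * I)‖ ≤ M * expR ((c - ε) * r)) ∧
    (∀ r : ℝ, 0 ≤ r → ‖g (-((r:ℂ) * I))‖ ≤ M * expR ((c - ε) * r)) := by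
  set s : ℝ := (Real.sqrt 2)⁻¹ with hs
  have hs0 : 0 < s := by positivity
  have hs2 : s * s = 1 / 2 := by
    rw [hs, ← mul_inv]
    rw [Real.mul_self_sqrt (by norm_num : (0:ℝ) ≤ 2)]; norm_num
  set v : ℂ := (s : ℂ) + (s : ℂ) * I with hv
  have hvnorm : ‖v‖ = 1 := by
    have : ‖v‖ = 1 := by
      rw [Complex.norm_def]
      have : Complex.normSq v = 1 := by
        rw [Complex.normSq_apply]
        simp [hv]
        linarith [hs2]
      rw [this, Real.sqrt_one]
    exact this
  -- quadrant bounds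
  have S1 : ∀ z : ℂ, 0 ≤ z.re → 0 ≤ z.im → ‖g z‖ ≤ M * expR (-ε * z.re + c * z.im) := by
    intro z hx hy
    have := pl_step g hg hbd 1 (by simp) (-ε) c
      (fun r hr => by simpa using hre r hr)
      (fun r hr => by simpa using him r hr) z hx hy
    simpa using this
  have S2 : ∀ z : ℂ, 0 ≤ z.re → 0 ≤ z.im → ‖g (z * I)‖ ≤ M * expR (c * z.re + -ε * z.im) := by
    intro z hx hy
    have := pl_step g hg hbd I (by simp) c (-ε)
      (fun r hr => him r hr)
      (fun r hr => by
        have e : (r : ℂ) * (I * I) = -(r : ℂ) := by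
          rw [Complex.I_mul_I]; ring
        rw [e]; exact hre' r hr) z hx hy
    exact this
  have S3 : ∀ z : ℂ, 0 ≤ z.re → 0 ≤ z.im → ‖g (z * (-1))‖ ≤ M * expR (-ε * z.re + c * z.im) := by
    intro z hx hy
    have := pl_step g hg hbd (-1) (by simp) (-ε) c
      (fun r hr => by
        have e : (r : ℂ) * (-1) = -(r : ℂ) := by ring
        rw [e]; exact hre' r hr)
      (fun r hr => by
        have e : (r : ℂ) * (-1 * I) = -((r:ℂ) * I) := by ring
        rw [e]; exact him' r hr) z hx hy
    exact this
  have S4 : ∀ z : ℂ, 0 ≤ z.re → 0 ≤ z.im → ‖g (z * (-I))‖ ≤ M * expR (c * z.re + -ε * z.im) := by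
    intro z hx hy
    have := pl_step g hg hbd (-I) (by simp) c (-ε)
      (fun r hr => by
        have e : (r : ℂ) * (-I) = -((r:ℂ) * I) := by ring
        rw [e]; exact him' r hr)
      (fun r hr => by
        have e : (r : ℂ) * (-I * I) = (r : ℂ) := by
          have : (I:ℂ) * I = -1 := Complex.I_mul_I
          rw [neg_mul, this]; ring
        rw [e]; exact hre r hr) z hx hy
    exact this
  have hres : ∀ r : ℝ, ((r * s : ℝ) : ℂ) + ((r * s : ℝ) : ℂ) * I = (r : ℂ) * v := by
    intro r; rw [hv]; push_cast; ring
  have dre : ∀ r : ℝ, (((r * s : ℝ) : ℂ) + ((r * s : ℝ) : ℂ) * I).re = r * s := by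
    intro r; simp
  have dim : ∀ r : ℝ, (((r * s : ℝ) : ℂ) + ((r * s : ℝ) : ℂ) * I).im = r * s := by
    intro r; simp
  -- diagonal ray bounds for direction v and -v
  have D1 : ∀ r : ℝ, 0 ≤ r → ‖g ((r:ℂ) * v)‖ ≤ M * expR ((c - ε) * s * r) := by
    intro r hr
    have hrs : 0 ≤ r * s := mul_nonneg hr hs0.le
    have := S1 (((r * s : ℝ) : ℂ) + ((r * s : ℝ) : ℂ) * I) (by rw [dre]; exact hrs)
      (by rw [dim]; exact hrs)
    rw [dre, dim, hres] at this
    calc ‖g ((r:ℂ) * v)‖ ≤ M * expR (-ε * (r * s) + c * (r * s)) := this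
      _ = M * expR ((c - ε) * s * r) := by ring_nf
  have D2 : ∀ r : ℝ, 0 ≤ r → ‖g ((r:ℂ) * (v * I))‖ ≤ M * expR ((c - ε) * s * r) := by
    intro r hr
    have hrs : 0 ≤ r * s := mul_nonneg hr hs0.le
    have := S2 (((r * s : ℝ) : ℂ) + ((r * s : ℝ) : ℂ) * I) (by rw [dre]; exact hrs)
      (by rw [dim]; exact hrs)
    rw [dre, dim] at this
    have e : (((r * s : ℝ) : ℂ) + ((r * s : ℝ) : ℂ) * I) * I = (r:ℂ) * (v * I) := by
      rw [hv]; push_cast; ring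
    rw [e] at this
    calc ‖g ((r:ℂ) * (v * I))‖ ≤ M * expR (c * (r * s) + -ε * (r * s)) := this
      _ = M * expR ((c - ε) * s * r) := by ring_nf
  have D3 : ∀ r : ℝ, 0 ≤ r → ‖g ((r:ℂ) * (-v))‖ ≤ M * expR ((c - ε) * s * r) := by
    intro r hr
    have hrs : 0 ≤ r * s := mul_nonneg hr hs0.le
    have := S3 (((r * s : ℝ) : ℂ) + ((r * s : ℝ) : ℂ) * I) (by rw [dre]; exact hrs)
      (by rw [dim]; exact hrs)
    rw [dre, dim] at this
    have e : (((r * s : ℝ) : ℂ) + ((r * s : ℝ) : ℂ) * I) * (-1) = (r:ℂ) * (-v) := by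
      rw [hv]; push_cast; ring
    rw [e] at this
    calc ‖g ((r:ℂ) * (-v))‖ ≤ M * expR (-ε * (r * s) + c * (r * s)) := this
      _ = M * expR ((c - ε) * s * r) := by ring_nf
  have D4 : ∀ r : ℝ, 0 ≤ r → ‖g ((r:ℂ) * (-v * I))‖ ≤ M * expR ((c - ε) * s * r) := by
    intro r hr
    have hrs : 0 ≤ r * s := mul_nonneg hr hs0.le
    have := S4 (((r * s : ℝ) : ℂ) + ((r * s : ℝ) : ℂ) * I) (by rw [dre]; exact hrs)
      (by rw [dim]; exact hrs)
    rw [dre, dim] at this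
    have e : (((r * s : ℝ) : ℂ) + ((r * s : ℝ) : ℂ) * I) * (-I) = (r:ℂ) * (-v * I) := by
      rw [hv]; push_cast; ring
    rw [e] at this
    calc ‖g ((r:ℂ) * (-v * I))‖ ≤ M * expR (c * (r * s) + -ε * (r * s)) := this
      _ = M * expR ((c - ε) * s * r) := by ring_nf
  constructor
  · intro r hr
    have hrs : 0 ≤ r * s := mul_nonneg hr hs0.le
    have := pl_step g hg hbd v hvnorm ((c - ε) * s) ((c - ε) * s) D1 D2
      (((r * s : ℝ) : ℂ) + ((r * s : ℝ) : ℂ) * I) (by rw [dre]; exact hrs)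
      (by rw [dim]; exact hrs)
    rw [dre, dim] at this
    have e : (((r * s : ℝ) : ℂ) + ((r * s : ℝ) : ℂ) * I) * v = (r:ℂ) * I := by
      rw [hv]; push_cast
      have h2 : (s:ℂ) * s = 1/2 := by
        rw [← Complex.ofReal_mul, hs2]; norm_num
      linear_combination (2 * (r:ℂ) * I) * h2 + ((r:ℂ) * (s:ℂ)^2) * Complex.I_sq
    rw [e] at this
    calc ‖g ((r:ℂ) * I)‖ ≤ M * expR ((c - ε) * s * (r * s) + (c - ε) * s * (r * s)) := this
      _ = M * expR ((c - ε) * (2 * (s * s)) * r) := by ring_nf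
      _ = M * expR ((c - ε) * r) := by rw [hs2]; ring_nf
  · intro r hr
    have hrs : 0 ≤ r * s := mul_nonneg hr hs0.le
    have := pl_step g hg hbd (-v) (by rwa [norm_neg]) ((c - ε) * s) ((c - ε) * s) D3 D4
      (((r * s : ℝ) : ℂ) + ((r * s : ℝ) : ℂ) * I) (by rw [dre]; exact hrs)
      (by rw [dim]; exact hrs)
    rw [dre, dim] at this
    have e : (((r * s : ℝ) : ℂ) + ((r * s : ℝ) : ℂ) * I) * (-v) = -((r:ℂ) * I) := by
      rw [hv]; push_cast
      have h2 : (s:ℂ) * s = 1/2 := by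
        rw [← Complex.ofReal_mul, hs2]; norm_num
      linear_combination (-2 * (r:ℂ) * I) * h2 - ((r:ℂ) * (s:ℂ)^2) * Complex.I_sq
    rw [e] at this
    calc ‖g (-((r:ℂ) * I))‖ ≤ M * expR ((c - ε) * s * (r * s) + (c - ε) * s * (r * s)) := this
      _ = M * expR ((c - ε) * (2 * (s * s)) * r) := by ring_nf
      _ = M * expR ((c - ε) * r) := by rw [hs2]; ring_nf

theorem stmt_13 (f : ℂ → ℂ) (hf : Differentiable ℂ f) (hne : f ≠ 0)
    (htype : ∃ C > (0:ℝ), ∃ k > (0:ℝ), ∀ z : ℂ, ‖f z‖ ≤ C * Real.exp (k * ‖z‖))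
    (φ : ℝ) :
    0 ≤ limsup (fun r : ℝ =>
          Real.log ‖f (r * Complex.exp (φ * Complex.I))‖ / r) atTop
      + limsup (fun r : ℝ =>
          Real.log ‖f (r * Complex.exp ((φ + Real.pi) * Complex.I))‖ / r) atTop := by
  obtain ⟨C, hC, k, hk, hCk⟩ := htype
  by_contra hcon
  push_neg at hcon
  set e : ℂ := Complex.exp ((φ : ℂ) * I) with he_def
  have he : ‖e‖ = 1 := by
    rw [he_def, Complex.norm_exp_ofReal_mul_I]
  have he' : Complex.exp (((φ:ℂ) + (Real.pi:ℂ)) * I) = -e := by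
    rw [he_def]
    push_cast
    rw [add_mul, Complex.exp_add, Complex.exp_pi_mul_I]
    ring
  set u : ℝ → ℝ := fun r => Real.log ‖f (r * Complex.exp ((φ:ℂ) * I))‖ / r with hu_def
  set v : ℝ → ℝ := fun r => Real.log ‖f (r * Complex.exp (((φ:ℂ) + (Real.pi:ℂ)) * I))‖ / r
    with hv_def
  -- boundedness above of both sequences
  have hnorm1 : ∀ r : ℝ, 0 ≤ r → ‖(r : ℂ) * Complex.exp ((φ:ℂ) * I)‖ = r := by
    intro r hr
    rw [norm_mul, ← he_def, he, mul_one, Complex.norm_real, Real.norm_eq_abs, _root_.abs_of_nonneg hr]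
  have hnorm2 : ∀ r : ℝ, 0 ≤ r → ‖(r : ℂ) * Complex.exp (((φ:ℂ) + (Real.pi:ℂ)) * I)‖ = r := by
    intro r hr
    rw [he', norm_mul, norm_neg, he, mul_one, Complex.norm_real, Real.norm_eq_abs,
      _root_.abs_of_nonneg hr]
  have hboundgen : ∀ (z : ℂ) (r : ℝ), 1 ≤ r → ‖z‖ = r →
      Real.log ‖f z‖ / r ≤ |Real.log C| + k := by
    intro z r hr hz
    have hr0 : (0:ℝ) < r := lt_of_lt_of_le one_pos hr
    rcases eq_or_lt_of_le (norm_nonneg (f z)) with h0 | hpos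
    · rw [← h0, Real.log_zero, zero_div]
      positivity
    · have hlog : Real.log ‖f z‖ ≤ Real.log C + k * r := by
        have h1 := Real.log_le_log hpos (hCk z)
        rwa [Real.log_mul (ne_of_gt hC) (Real.exp_ne_zero _), Real.log_exp, hz] at h1
      rw [div_le_iff₀ hr0]
      calc Real.log ‖f z‖ ≤ Real.log C + k * r := hlog
        _ ≤ (|Real.log C| + k) * r := by
            nlinarith [le_abs_self (Real.log C), abs_nonneg (Real.log C), hk.le]
  have hb1 : IsBoundedUnder (· ≤ ·) atTop u := by
    apply isBoundedUnder_of_eventually_le (a := |Real.log C| + k)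
    filter_upwards [eventually_ge_atTop (1:ℝ)] with r hr
    exact hboundgen _ r hr (hnorm1 r (le_trans zero_le_one hr))
  have hb2 : IsBoundedUnder (· ≤ ·) atTop v := by
    apply isBoundedUnder_of_eventually_le (a := |Real.log C| + k)
    filter_upwards [eventually_ge_atTop (1:ℝ)] with r hr
    exact hboundgen _ r hr (hnorm2 r (le_trans zero_le_one hr))
  set ε : ℝ := -(limsup u atTop + limsup v atTop) / 3 with hε_def
  have hε : 0 < ε := by
    rw [hε_def]; linarith
  set a : ℝ := limsup u atTop + ε with ha_def
  set b : ℝ := limsup v atTop + ε with hb_def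
  have hab : a + b = -ε := by rw [ha_def, hb_def, hε_def]; ring
  have ev1 : ∀ᶠ r in atTop, u r < a := eventually_lt_of_limsup_lt (by linarith) hb1
  have ev2 : ∀ᶠ r in atTop, v r < b := eventually_lt_of_limsup_lt (by linarith) hb2
  obtain ⟨R₀, hR₀⟩ := eventually_atTop.mp ((ev1.and ev2).and (eventually_ge_atTop (1:ℝ)))
  set R : ℝ := max R₀ 1 with hR_def
  have hR1 : (1:ℝ) ≤ R := le_max_right _ _
  have hR0 : (0:ℝ) ≤ R := le_trans zero_le_one hR1
  -- pointwise exponential bounds on the two rays, for r ≥ R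
  have hray1 : ∀ r : ℝ, R ≤ r → ‖f ((r:ℂ) * e)‖ ≤ expR (a * r) := by
    intro r hr
    obtain ⟨⟨h1, _⟩, hr1⟩ := hR₀ r (le_trans (le_max_left _ _) hr)
    have hr0 : (0:ℝ) < r := lt_of_lt_of_le one_pos hr1
    have hlt : Real.log ‖f ((r:ℂ) * e)‖ < a * r := by
      have := (div_lt_iff₀ hr0).mp h1
      rwa [he_def]
    rcases eq_or_lt_of_le (norm_nonneg (f ((r:ℂ) * e))) with h0 | hpos
    · rw [← h0]; exact (Real.exp_pos _).le
    · calc ‖f ((r:ℂ) * e)‖ = expR (Real.log ‖f ((r:ℂ) * e)‖) := (Real.exp_log hpos).symm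
        _ ≤ expR (a * r) := Real.exp_le_exp.2 hlt.le
  have hray2 : ∀ r : ℝ, R ≤ r → ‖f (-((r:ℂ) * e))‖ ≤ expR (b * r) := by
    intro r hr
    obtain ⟨⟨_, h2⟩, hr1⟩ := hR₀ r (le_trans (le_max_left _ _) hr)
    have hr0 : (0:ℝ) < r := lt_of_lt_of_le one_pos hr1
    have harg : (r:ℂ) * Complex.exp (((φ:ℂ) + (Real.pi:ℂ)) * I) = -((r:ℂ) * e) := by
      rw [he']; ring
    have hlt : Real.log ‖f (-((r:ℂ) * e))‖ < b * r := by
      have := (div_lt_iff₀ hr0).mp h2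
      rwa [harg] at this
    rcases eq_or_lt_of_le (norm_nonneg (f (-((r:ℂ) * e)))) with h0 | hpos
    · rw [← h0]; exact (Real.exp_pos _).le
    · calc ‖f (-((r:ℂ) * e))‖ = expR (Real.log ‖f (-((r:ℂ) * e))‖) := (Real.exp_log hpos).symm
        _ ≤ expR (b * r) := Real.exp_le_exp.2 hlt.le
  -- the even auxiliary function
  set g : ℂ → ℂ := fun w => f (w * e) * f (-(w * e)) with hg_def
  have hgdiff : Differentiable ℂ g :=
    (hf.comp (differentiable_id.mul_const e)).mul
      (hf.comp (differentiable_id.mul_const e).neg)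
  have hgbd : ∀ z : ℂ, ‖g z‖ ≤ (C * C) * expR ((2 * k) * ‖z‖) := by
    intro z
    have hz1 : ‖z * e‖ = ‖z‖ := by rw [norm_mul, he, mul_one]
    have hb1' : ‖f (z * e)‖ ≤ C * expR (k * ‖z‖) := by
      have := hCk (z * e); rwa [hz1] at this
    have hb2' : ‖f (-(z * e))‖ ≤ C * expR (k * ‖z‖) := by
      have := hCk (-(z * e)); rwa [norm_neg, hz1] at this
    rw [hg_def]
    calc ‖f (z * e) * f (-(z * e))‖ = ‖f (z * e)‖ * ‖f (-(z * e))‖ := norm_mul _ _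
      _ ≤ (C * expR (k * ‖z‖)) * (C * expR (k * ‖z‖)) :=
          mul_le_mul hb1' hb2' (norm_nonneg _) (by positivity)
      _ = (C * C) * expR ((2 * k) * ‖z‖) := by
          rw [show (C * expR (k * ‖z‖)) * (C * expR (k * ‖z‖))
              = (C * C) * (expR (k * ‖z‖) * expR (k * ‖z‖)) by ring, ← Real.exp_add]
          ring_nf
  have hgeven : ∀ w : ℂ, g (-w) = g w := by
    intro w
    rw [hg_def]
    simp only
    have h1 : -w * e = -(w * e) := by ring
    rw [h1, neg_neg]
    exact mul_comm _ _
  set M : ℝ := max ((C * C) * expR ((2 * k + ε) * R)) 1 with hM_def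
  have hM1 : (1:ℝ) ≤ M := le_max_right _ _
  have hMA : C * C ≤ M := by
    have h1 : C * C ≤ (C * C) * expR ((2 * k + ε) * R) := by
      nlinarith [Real.one_le_exp (by positivity : (0:ℝ) ≤ (2 * k + ε) * R), sq_nonneg C, hC]
    exact le_trans h1 (le_max_left _ _)
  -- decay bound on the real axis
  have hre : ∀ r : ℝ, 0 ≤ r → ‖g ((r:ℂ))‖ ≤ M * expR (-ε * r) := by
    intro r hr
    rcases le_or_gt R r with hRr | hrR
    · have h1 := hray1 r hRr
      have h2 := hray2 r hRr
      have : ‖g ((r:ℂ))‖ ≤ expR (a * r) * expR (b * r) := by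
        rw [hg_def]
        calc ‖f ((r:ℂ) * e) * f (-((r:ℂ) * e))‖
            = ‖f ((r:ℂ) * e)‖ * ‖f (-((r:ℂ) * e))‖ := norm_mul _ _
          _ ≤ expR (a * r) * expR (b * r) :=
              mul_le_mul h1 h2 (norm_nonneg _) (Real.exp_pos _).le
      calc ‖g ((r:ℂ))‖ ≤ expR (a * r) * expR (b * r) := this
        _ = expR ((a + b) * r) := by rw [← Real.exp_add]; ring_nf
        _ = expR (-ε * r) := by rw [hab]
        _ ≤ M * expR (-ε * r) := le_mul_of_one_le_left (Real.exp_pos _).le hM1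
    · have h1 := hgbd ((r:ℂ))
      have hnr : ‖(r:ℂ)‖ = r := by
        rw [Complex.norm_real, Real.norm_eq_abs, _root_.abs_of_nonneg hr]
      rw [hnr] at h1
      calc ‖g ((r:ℂ))‖ ≤ (C * C) * expR ((2 * k) * r) := h1
        _ = ((C * C) * expR ((2 * k + ε) * r)) * expR (-ε * r) := by
            rw [show ((C * C) * expR ((2 * k + ε) * r)) * expR (-ε * r)
              = (C * C) * (expR ((2 * k + ε) * r) * expR (-ε * r)) from by ring,
              ← Real.exp_add]
            ring_nf
        _ ≤ M * expR (-ε * r) := by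
            have : (C * C) * expR ((2 * k + ε) * r) ≤ M := by
              refine le_trans ?_ (le_max_left _ _)
              have : expR ((2 * k + ε) * r) ≤ expR ((2 * k + ε) * R) := by
                apply Real.exp_le_exp.2
                nlinarith [hε, hk]
              nlinarith [Real.exp_pos ((2 * k + ε) * r), sq_nonneg C, hC]
            exact mul_le_mul_of_nonneg_right this (Real.exp_pos _).le
  have hre' : ∀ r : ℝ, 0 ≤ r → ‖g (-(r:ℂ))‖ ≤ M * expR (-ε * r) := by
    intro r hr
    rw [hgeven]
    exact hre r hr
  -- initial bound on the imaginary axis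
  have him0 : ∀ r : ℝ, 0 ≤ r → ‖g ((r:ℂ) * I)‖ ≤ M * expR ((2 * k) * r) := by
    intro r hr
    have h1 := hgbd ((r:ℂ) * I)
    have hnr : ‖(r:ℂ) * I‖ = r := by
      rw [norm_mul, Complex.norm_real, Complex.norm_I, mul_one, Real.norm_eq_abs,
        _root_.abs_of_nonneg hr]
    rw [hnr] at h1
    exact le_trans h1 (mul_le_mul_of_nonneg_right hMA (Real.exp_pos _).le)
  have him0' : ∀ r : ℝ, 0 ≤ r → ‖g (-((r:ℂ) * I))‖ ≤ M * expR ((2 * k) * r) := by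
    intro r hr
    rw [hgeven]
    exact him0 r hr
  -- iterate the Phragmén–Lindelöf improvement
  have iter : ∀ n : ℕ,
      (∀ r : ℝ, 0 ≤ r → ‖g ((r:ℂ) * I)‖ ≤ M * expR ((2 * k - n * ε) * r)) ∧
      (∀ r : ℝ, 0 ≤ r → ‖g (-((r:ℂ) * I))‖ ≤ M * expR ((2 * k - n * ε) * r)) := by
    intro n
    induction n with
    | zero => simpa using ⟨him0, him0'⟩
    | succ n ih =>
        have key := pl_improve g hgdiff hgbd hre hre' ih.1 ih.2
        have heq : 2 * k - ((n:ℕ) + 1 : ℕ) * ε = (2 * k - n * ε) - ε := by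
          push_cast; ring
        constructor <;> intro r hr
        · rw [heq]; exact key.1 r hr
        · rw [heq]; exact key.2 r hr
  -- g vanishes on the positive imaginary axis
  have haxis : ∀ r : ℝ, 0 < r → g ((r:ℂ) * I) = 0 := by
    intro r hr
    have hnn : ∀ n : ℕ, ‖g ((r:ℂ) * I)‖ ≤ M * expR ((2 * k - n * ε) * r) :=
      fun n => (iter n).1 r hr.le
    have hshape : ∀ n : ℕ, M * expR ((2 * k - n * ε) * r)
        = (M * expR (2 * k * r)) * expR (-(ε * r)) ^ n := by
      intro n
      rw [← Real.exp_nat_mul, mul_assoc, ← Real.exp_add]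
      ring_nf
    have htend : Tendsto (fun n : ℕ => M * expR ((2 * k - n * ε) * r)) atTop (𝓝 0) := by
      simp only [hshape]
      rw [show (0:ℝ) = (M * expR (2 * k * r)) * 0 by ring]
      exact (tendsto_pow_atTop_nhds_zero_of_lt_one (Real.exp_pos _).le
        (Real.exp_lt_one_iff.2 (by nlinarith))).const_mul _
    have h0 : ‖g ((r:ℂ) * I)‖ ≤ 0 := ge_of_tendsto htend (Eventually.of_forall hnn)
    exact norm_le_zero_iff.mp h0
  -- hence g ≡ 0 by the identity theorem
  have hganalytic : AnalyticOnNhd ℂ g Set.univ :=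
    analyticOnNhd_univ_iff_differentiable.mpr hgdiff
  have hfreq : ∃ᶠ z in nhdsWithin I {I}ᶜ, g z = 0 := by
    have hseq : Tendsto (fun n : ℕ => ((1 + ((n:ℝ) + 1)⁻¹ : ℝ) : ℂ) * I) atTop (nhdsWithin I {I}ᶜ) := by
      rw [tendsto_nhdsWithin_iff]
      constructor
      · have h1 : Tendsto (fun n : ℕ => (1 + ((n:ℝ) + 1)⁻¹ : ℝ)) atTop (𝓝 1) := by
          have := tendsto_one_div_add_atTop_nhds_zero_nat (𝕜 := ℝ)
          have h2 : Tendsto (fun n : ℕ => 1 + 1 / ((n:ℝ) + 1)) atTop (𝓝 (1 + 0)) :=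
            tendsto_const_nhds.add this
          simpa [one_div] using h2
        have h2 : Tendsto (fun n : ℕ => ((1 + ((n:ℝ) + 1)⁻¹ : ℝ) : ℂ)) atTop (𝓝 (1:ℂ)) :=
          (Complex.continuous_ofReal.tendsto 1).comp h1
        have h3 := h2.mul_const I
        simpa using h3
      · refine Eventually.of_forall fun n => ?_
        simp only [Set.mem_compl_iff, Set.mem_singleton_iff]
        intro hcontra
        have hI : ((1 + ((n:ℝ) + 1)⁻¹ : ℝ) : ℂ) = 1 := by
          have := mul_right_cancel₀ Complex.I_ne_zero (hcontra.trans (one_mul I).symm)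
          exact this
        have : (1 + ((n:ℝ) + 1)⁻¹ : ℝ) = 1 := by exact_mod_cast hI
        have hp : (0:ℝ) < ((n:ℝ) + 1)⁻¹ := by positivity
        linarith
    apply hseq.frequently
    apply Eventually.frequently
    refine Eventually.of_forall fun n => ?_
    exact haxis _ (by positivity)
  have hg0 : ∀ w : ℂ, g w = 0 := fun w =>
    hganalytic.eqOn_zero_of_preconnected_of_frequently_eq_zero isPreconnected_univ
      (Set.mem_univ I) hfreq (Set.mem_univ w)
  -- hence f z * f (-z) = 0 for all z
  have hprod : ∀ z : ℂ, f z * f (-z) = 0 := by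
    intro z
    have he0 : e ≠ 0 := by rw [he_def]; exact Complex.exp_ne_zero _
    have hz : z * e⁻¹ * e = z := by field_simp
    have := hg0 (z * e⁻¹)
    rw [hg_def] at this
    simp only at this
    rw [hz] at this
    exact this
  -- contradiction with f ≠ 0
  have hfz : ∃ z₀, f z₀ ≠ 0 := by
    by_contra h
    push_neg at h
    exact hne (funext fun z => h z)
  obtain ⟨z₀, hz₀⟩ := hfz
  have hev : ∀ᶠ z in nhds z₀, f z ≠ 0 := hf.continuous.continuousAt.eventually_ne hz₀
  have hev2 : (fun z => f (-z)) =ᶠ[nhds z₀] 0 := by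
    filter_upwards [hev] with z hz
    rcases mul_eq_zero.mp (hprod z) with h | h
    · exact absurd h hz
    · simpa using h
  have hanal2 : AnalyticOnNhd ℂ (fun z => f (-z)) Set.univ :=
    analyticOnNhd_univ_iff_differentiable.mpr (hf.comp differentiable_neg)
  have hall := hanal2.eqOn_zero_of_preconnected_of_eventuallyEq_zero isPreconnected_univ
    (Set.mem_univ z₀) hev2 (Set.mem_univ (-z₀))
  simp only [neg_neg, Pi.zero_apply] at hall
  exact hz₀ hall
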